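/- Under the hypotheses of the pullback Cauchy lemma, the invariant graph γ is attracting: for ν-a.e. ω and every x ∈ I, |g^n(ω, x) − γ(σ^n ω)| → 0 as n → ∞. -/
import Mathlib


open Set Filter Topology MeasureTheory

/-- Lipschitz seminorm of a map, computed over the unit interval `I = [0,1]`. -/
noncomputable def lipSemi (f : ℝ → ℝ) : ℝ :=
  sSup {r : ℝ | ∃ x ∈ Icc (0:ℝ) 1, ∃ y ∈ Icc (0:ℝ) 1, x ≠ y ∧ r = |f x - f y| / |x - y|}

/-- Fiber compositions `g^n(ω, x) = g_{σ^{n−1}ω}(⋯ g_ω(x)⋯)` of a skew product over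
an (abstract) base transformation `σ`. -/
def gIter {S : Type*} (σ : S → S) (g : S → ℝ → ℝ) : ℕ → S → ℝ → ℝ
  | 0, _, x => x
  | n + 1, ω, x => gIter σ g n (σ ω) (g ω x)

lemma lipSemi_bound (f : ℝ → ℝ) (L : NNReal) (hf : LipschitzOnWith L f (Icc (0:ℝ) 1)) :
    (∀ x ∈ Icc (0:ℝ) 1, ∀ y ∈ Icc (0:ℝ) 1, |f x - f y| ≤ lipSemi f * |x - y|) ∧
      0 ≤ lipSemi f := by
  set A := {r : ℝ | ∃ x ∈ Icc (0:ℝ) 1, ∃ y ∈ Icc (0:ℝ) 1, x ≠ y ∧ r = |f x - f y| / |x - y|}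
  have hbdd : BddAbove A := by
    refine ⟨L, fun r hr => ?_⟩
    obtain ⟨x, hx, y, hy, hxy, rfl⟩ := hr
    have hd : dist (f x) (f y) ≤ L * dist x y := hf.dist_le_mul x hx y hy
    rw [Real.dist_eq, Real.dist_eq] at hd
    have hpos : 0 < |x - y| := abs_pos.mpr (sub_ne_zero.mpr hxy)
    exact (div_le_iff₀ hpos).mpr hd
  have h0 : (0:ℝ) ∈ Icc (0:ℝ) 1 := by constructor <;> norm_num
  have h1 : (1:ℝ) ∈ Icc (0:ℝ) 1 := by constructor <;> norm_num
  have hmem : |f 0 - f 1| / |(0:ℝ) - 1| ∈ A := ⟨0, h0, 1, h1, by norm_num, rfl⟩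
  have hnonneg : 0 ≤ lipSemi f :=
    le_trans (by positivity) (le_csSup hbdd hmem)
  refine ⟨fun x hx y hy => ?_, hnonneg⟩
  rcases eq_or_ne x y with rfl | hxy
  · simp
  · have hpos : 0 < |x - y| := abs_pos.mpr (sub_ne_zero.mpr hxy)
    have : |f x - f y| / |x - y| ≤ lipSemi f :=
      le_csSup hbdd ⟨x, hx, y, hy, hxy, rfl⟩
    calc |f x - f y| = |f x - f y| / |x - y| * |x - y| := by field_simp
    _ ≤ lipSemi f * |x - y| := by
        exact mul_le_mul_of_nonneg_right this hpos.le

lemma gIter_mapsTo {S : Type*} (σ : S → S) (g : S → ℝ → ℝ)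
    (hmaps : ∀ ω, MapsTo (g ω) (Icc (0:ℝ) 1) (Icc (0:ℝ) 1)) :
    ∀ n ω, MapsTo (gIter σ g n ω) (Icc (0:ℝ) 1) (Icc (0:ℝ) 1) := by
  intro n
  induction n with
  | zero => intro ω x hx; exact hx
  | succ n ih => intro ω x hx; exact ih (σ ω) (hmaps ω hx)

lemma gIter_lip {S : Type*} (σ : S → S) (g : S → ℝ → ℝ)
    (hLip : ∀ ω, ∃ L : NNReal, LipschitzOnWith L (g ω) (Icc (0:ℝ) 1))
    (hmaps : ∀ ω, MapsTo (g ω) (Icc (0:ℝ) 1) (Icc (0:ℝ) 1)) :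
    ∀ n ω, ∃ L : NNReal, LipschitzOnWith L (gIter σ g n ω) (Icc (0:ℝ) 1) := by
  intro n
  induction n with
  | zero => intro ω; exact ⟨1, LipschitzWith.id.lipschitzOnWith⟩
  | succ n ih =>
      intro ω
      obtain ⟨L₀, hL₀⟩ := hLip ω
      obtain ⟨M, hM⟩ := ih (σ ω)
      exact ⟨M * L₀, hM.comp hL₀ (hmaps ω)⟩

lemma gIter_graph {S : Type*} (σ : S → S) (g : S → ℝ → ℝ) (γ : S → ℝ) :
    ∀ n ω, (∀ k : ℕ, g (σ^[k] ω) (γ (σ^[k] ω)) = γ (σ^[k+1] ω)) →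
      gIter σ g n ω (γ ω) = γ (σ^[n] ω) := by
  intro n
  induction n with
  | zero => intro ω _; rfl
  | succ n ih =>
      intro ω h
      have h0 : g ω (γ ω) = γ (σ ω) := by simpa using h 0
      have e1 : gIter σ g (n+1) ω (γ ω) = gIter σ g n (σ ω) (g ω (γ ω)) := rfl
      rw [e1, h0, ih (σ ω) (fun k => by
        simpa [Function.iterate_succ_apply] using h (k+1)),
        ← Function.iterate_succ_apply]

/-- The invariant graph `γ` is attracting: under exponential decay of the fiber
Lipschitz seminorms, for a.e. `ω` and every `x ∈ I`,
`|g^n(ω, x) − γ(σ^n ω)| → 0` as `n → ∞`. -/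
theorem invariant_graph_attracting
    {S : Type*} [MeasurableSpace S] (ν : Measure S) [IsProbabilityMeasure ν]
    (σ : S ≃ S) (hσ : MeasurePreserving σ ν ν) (hσinv : MeasurePreserving σ.symm ν ν)
    (herg : Ergodic σ ν)
    (g : S → ℝ → ℝ)
    (hLip : ∀ ω, ∃ L : NNReal, LipschitzOnWith L (g ω) (Icc (0:ℝ) 1))
    (hmaps : ∀ ω, MapsTo (g ω) (Icc (0:ℝ) 1) (Icc (0:ℝ) 1))
    (lam : ℝ) (hlam : lam < 0) (C' : S → ℝ)
    (hdecay : ∀ᵐ ω ∂ν, ∀ n : ℕ, 1 ≤ n →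
      lipSemi (gIter σ g n ω) ≤ C' ω * Real.exp (lam * n))
    (γ : S → ℝ) (hγmeas : Measurable γ) (hγI : ∀ᵐ ω ∂ν, γ ω ∈ Icc (0:ℝ) 1)
    (hinv : ∀ᵐ ω ∂ν, g ω (γ ω) = γ (σ ω)) :
    ∀ᵐ ω ∂ν, ∀ x ∈ Icc (0:ℝ) 1,
      Tendsto (fun n : ℕ => |gIter σ g n ω x - γ ((⇑σ)^[n] ω)|) atTop (𝓝 0) := by
  have horbit : ∀ᵐ ω ∂ν, ∀ k : ℕ, g ((⇑σ)^[k] ω) (γ ((⇑σ)^[k] ω)) = γ ((⇑σ)^[k+1] ω) := by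
    rw [MeasureTheory.ae_all_iff]
    intro k
    have := ((hσ.iterate k).quasiMeasurePreserving).ae hinv
    filter_upwards [this] with ω h
    rw [h, Function.iterate_succ_apply']
  filter_upwards [hdecay, hγI, horbit] with ω hdec hγω horb
  intro x hx
  -- distance from x to γ ω is at most 1
  have hdist1 : |x - γ ω| ≤ 1 := by
    rw [abs_sub_le_iff]
    constructor <;> linarith [hx.1, hx.2, hγω.1, hγω.2]
  have hgraph : ∀ n, gIter σ g n ω (γ ω) = γ ((⇑σ)^[n] ω) :=
    fun n => gIter_graph σ g γ n ω horb
  -- squeeze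
  have hbound : ∀ n : ℕ, 1 ≤ n →
      |gIter σ g n ω x - γ ((⇑σ)^[n] ω)| ≤ C' ω * Real.exp (lam * n) := by
    intro n hn
    obtain ⟨L, hL⟩ := gIter_lip σ g hLip hmaps n ω
    obtain ⟨hlip, hnn⟩ := lipSemi_bound _ L hL
    calc |gIter σ g n ω x - γ ((⇑σ)^[n] ω)|
        = |gIter σ g n ω x - gIter σ g n ω (γ ω)| := by rw [hgraph n]
      _ ≤ lipSemi (gIter σ g n ω) * |x - γ ω| := hlip x hx (γ ω) hγω
      _ ≤ lipSemi (gIter σ g n ω) * 1 := mul_le_mul_of_nonneg_left hdist1 hnn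
      _ = lipSemi (gIter σ g n ω) := mul_one _
      _ ≤ C' ω * Real.exp (lam * n) := hdec n hn
  have hten : Tendsto (fun n : ℕ => C' ω * Real.exp (lam * n)) atTop (𝓝 0) := by
    have h1 : Tendsto (fun n : ℕ => lam * (n : ℝ)) atTop atBot := by
      apply Tendsto.comp (tendsto_id.const_mul_atTop_of_neg hlam) tendsto_natCast_atTop_atTop
    have h2 : Tendsto (fun n : ℕ => Real.exp (lam * n)) atTop (𝓝 0) :=
      Real.tendsto_exp_atBot.comp h1
    simpa using h2.const_mul (C' ω)
  refine squeeze_zero' ?_ ?_ hten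
  · filter_upwards with n using abs_nonneg _
  · filter_upwards [eventually_ge_atTop 1] with n hn using hbound n hn
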